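/- Let V be a vector space of dimension d ≥ 2 over a field of characteristic 0, and let Λ : V × V → V be a bilinear map such that for all u, v, w ∈ V the element Λ(u,w) ⊗ v + Λ(u,v) ⊗ w of V ⊗ V is symmetric, i.e., Λ(u,w) ⊗ v + Λ(u,v) ⊗ w = v ⊗ Λ(u,w) + w ⊗ Λ(u,v). Then there exists a linear functional ξ ∈ V* such that Λ(u,v) = ξ(u)·v for all u, v ∈ V (explicitly, ξ(u) = (1/d)·tr(v ↦ Λ(u,v))). -/

import Mathlib

open scoped TensorProduct

/-- Auxiliary: a linear map whose tensor-symmetry condition holds is a scalar multiple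
of the identity (dimension ≥ 2 not even needed beyond nontriviality). -/
theorem aux_eigen_everywhere (K : Type*) [Field K] [CharZero K]
    (V : Type*) [AddCommGroup V] [Module K V] [FiniteDimensional K V]
    (A : V →ₗ[K] V)
    (h : ∀ v w : V, A w ⊗ₜ[K] v + A v ⊗ₜ[K] w = v ⊗ₜ[K] A w + w ⊗ₜ[K] A v)
    (hnt : Nontrivial V) :
    ∃ c : K, ∀ v : V, A v = c • v := by
  -- scalar identity
  have hscal : ∀ (f g : Module.Dual K V) (v w : V),
      f (A w) * g v + f (A v) * g w = f v * g (A w) + f w * g (A v) := by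
    intro f g v w
    have := congrArg ((LinearMap.mul' K K).comp (TensorProduct.map f g)) (h v w)
    simpa using this
  -- every nonzero vector is an eigenvector
  have hspan : ∀ v : V, ∃ c : K, A v = c • v := by
    intro v
    by_cases hv : v = 0
    · exact ⟨0, by simp [hv]⟩
    · have hf : ∃ f : Module.Dual K V, f v ≠ 0 := by
        by_contra hcon
        push_neg at hcon
        exact hv ((Module.forall_dual_apply_eq_zero_iff K v).mp hcon)
      obtain ⟨f, hf⟩ := hf
      refine ⟨(f v)⁻¹ * f (A v), ?_⟩
      have : ∀ g : Module.Dual K V, g (A v - ((f v)⁻¹ * f (A v)) • v) = 0 := by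
        intro g
        have h1 := hscal f g v v
        rw [← two_mul, ← two_mul] at h1
        have h2 : f (A v) * g v = f v * g (A v) := mul_left_cancel₀ two_ne_zero h1
        rw [map_sub, map_smul, smul_eq_mul]
        rw [mul_assoc, h2, ← mul_assoc, inv_mul_cancel₀ hf, one_mul, sub_self]
      have := (Module.forall_dual_apply_eq_zero_iff K _).mp this
      rw [sub_eq_zero] at this
      exact this
  choose c hc using hspan
  obtain ⟨v0, hv0⟩ := exists_ne (0 : V)
  refine ⟨c v0, fun v => ?_⟩
  by_cases hdep : ∃ t : K, v = t • v0
  · obtain ⟨t, rfl⟩ := hdep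
    rw [map_smul, hc v0, smul_comm]
  · -- v and v0 are not proportional
    have hv : v ≠ 0 := by
      rintro rfl; exact hdep ⟨0, by simp⟩
    have h1 : A (v + v0) = c (v + v0) • (v + v0) := hc _
    rw [map_add, hc v, hc v0, smul_add] at h1
    have h2 : (c v - c (v + v0)) • v = (c (v + v0) - c v0) • v0 := by
      rw [sub_smul, sub_smul, sub_eq_sub_iff_add_eq_add, add_comm (c (v + v0) • v0)]
      exact h1
    have hcv : c v = c (v + v0) := by
      by_contra hne
      have hne' : c v - c (v + v0) ≠ 0 := sub_ne_zero.mpr hne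
      apply hdep
      refine ⟨(c v - c (v + v0))⁻¹ * (c (v + v0) - c v0), ?_⟩
      rw [mul_smul, ← h2, ← mul_smul, inv_mul_cancel₀ hne', one_smul]
    have hcv0 : c (v + v0) = c v0 := by
      rw [← hcv, sub_self, zero_smul] at h2
      rcases smul_eq_zero.mp h2.symm with h | h
      · rw [← hcv]; exact sub_eq_zero.mp h
      · exact absurd h hv0
    rw [hc v, hcv, hcv0]

theorem asymmetric_projective_difference_tensor (K : Type*) [Field K] [CharZero K]
    (V : Type*) [AddCommGroup V] [Module K V] [FiniteDimensional K V]
    (d : ℕ) (hd : 2 ≤ d) (hdim : Module.finrank K V = d)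
    (Λ : V →ₗ[K] V →ₗ[K] V)
    (hΛ : ∀ u v w : V,
      Λ u w ⊗ₜ[K] v + Λ u v ⊗ₜ[K] w = v ⊗ₜ[K] Λ u w + w ⊗ₜ[K] Λ u v) :
    ∃ ξ : V →ₗ[K] K, (∀ u v : V, Λ u v = ξ u • v) ∧
      ∀ u : V, ξ u = (d : K)⁻¹ * LinearMap.trace K V (Λ u) := by
  have hnt : Nontrivial V := by
    have hpos : 0 < Module.finrank K V := by rw [hdim]; omega
    exact Module.nontrivial_of_finrank_pos hpos
  have hd0 : (d : K) ≠ 0 := Nat.cast_ne_zero.mpr (by omega)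
  refine ⟨(d : K)⁻¹ • ((LinearMap.trace K V).comp Λ), fun u v => ?_, fun u => ?_⟩
  · obtain ⟨c, hc⟩ := aux_eigen_everywhere K V (Λ u) (hΛ u) hnt
    have hA : Λ u = c • LinearMap.id := by
      ext v; simp [hc v]
    have htr : LinearMap.trace K V (Λ u) = c * d := by
      rw [hA, map_smul, LinearMap.trace_id, hdim, smul_eq_mul]
    simp only [LinearMap.smul_apply, LinearMap.coe_comp, Function.comp_apply, smul_eq_mul]
    rw [htr, hc v]
    congr 1
    field_simp
  · simp
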